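/- Let (A, B, C) be a recollement of abelian categories with a ladder of r-height four (functors r⁰ ⊣ r¹ ⊣ r² ⊣ r³). Then r = r⁰ : C ⥤ B preserves Gorenstein projective objects, and e ∘ r restricted to Gorenstein projective objects of C is naturally isomorphic to the identity. -/

import Mathlib

open CategoryTheory CategoryTheory.Limits

universe v₁ v₂ v₃ u₁ u₂ u₃

/-- A recollement of abelian categories `(A, B, C)`: adjoint triples `(q, i, p)` and
`(l, e, r)` with `i`, `l`, `r` fully faithful and the essential image of `i` equal to
the kernel of `e`. -/
structure AbRecollement (A : Type u₁) (B : Type u₂) (C : Type u₃)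
    [Category.{v₁} A] [Category.{v₂} B] [Category.{v₃} C]
    [Abelian A] [Abelian B] [Abelian C] where
  i : A ⥤ B
  e : B ⥤ C
  q : B ⥤ A
  p : B ⥤ A
  l : C ⥤ B
  r : C ⥤ B
  adj_qi : q ⊣ i
  adj_ip : i ⊣ p
  adj_le : l ⊣ e
  adj_er : e ⊣ r
  i_full : i.Full
  i_faithful : i.Faithful
  l_full : l.Full
  l_faithful : l.Faithful
  r_full : r.Full
  r_faithful : r.Faithful
  essImage_i_eq_ker_e : ∀ X : B, i.essImage X ↔ Limits.IsZero (e.obj X)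

universe v u

/-- An object `X` of an abelian category is **Gorenstein projective** if it is the
cokernel of a differential in a totally acyclic complex of projectives, i.e. an acyclic
complex `P•` of projectives such that `Hom(P•, Q)` is acyclic for every projective `Q`. -/
def IsGorensteinProjective {A : Type u} [Category.{v} A] [Abelian A] (X : A) : Prop :=
  ∃ P : CochainComplex A ℤ,
    (∀ n, Projective (P.X n)) ∧
    (∀ n, P.ExactAt n) ∧
    (∀ (Q : A), Projective Q → ∀ n,
      (((preadditiveYoneda.obj Q).mapHomologicalComplex _).obj P.op).ExactAt n) ∧
    Nonempty (X ≅ Limits.cokernel (P.d (-1) 0))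

/-- An object `X` of an abelian category is **Gorenstein injective** if it is the kernel
of a differential in a totally acyclic complex of injectives, i.e. an acyclic complex
`I•` of injectives such that `Hom(E, I•)` is acyclic for every injective `E`. -/
def IsGorensteinInjective {A : Type u} [Category.{v} A] [Abelian A] (X : A) : Prop :=
  ∃ I : CochainComplex A ℤ,
    (∀ n, Injective (I.X n)) ∧
    (∀ n, I.ExactAt n) ∧
    (∀ (E : A), Injective E → ∀ n,
      (((preadditiveCoyoneda.obj (Opposite.op E)).mapHomologicalComplex _).obj I).ExactAt n) ∧
    Nonempty (X ≅ Limits.kernel (I.d 0 1))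

/-- An exact functor between abelian categories preserves exactness of complexes. -/
lemma AbRecollement.exactAt_map_aux {ι : Type*} {c : ComplexShape ι}
    {C : Type*} {D : Type*} [Category C] [Category D] [Abelian C] [Abelian D]
    (K : HomologicalComplex C c) (F : C ⥤ D) [F.Additive]
    [PreservesFiniteLimits F] [PreservesFiniteColimits F]
    (i : ι) (h : K.ExactAt i) : ((F.mapHomologicalComplex c).obj K).ExactAt i := by
  rw [HomologicalComplex.exactAt_iff] at h ⊢
  refine ShortComplex.exact_of_iso ?_ (h.map F)
  exact ShortComplex.isoMk (Iso.refl _) (Iso.refl _) (Iso.refl _) (by erw [Category.id_comp, Category.comp_id]; rfl) (by erw [Category.id_comp, Category.comp_id]; rfl)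

/-- Acyclicity of `Hom(P•, Q)` transfers along an additive adjunction. -/
lemma AbRecollement.homComplex_exactAt_aux
    {B : Type u₂} {C : Type u₃} [Category.{v₂} B] [Category.{v₃} C]
    [Abelian B] [Abelian C]
    (r : C ⥤ B) (r₁ : B ⥤ C) [r.Additive] [r₁.Additive] (adj : r ⊣ r₁)
    (P : CochainComplex C ℤ) (Q : B)
    (h : ∀ n, (((preadditiveYoneda.obj (r₁.obj Q)).mapHomologicalComplex _).obj P.op).ExactAt n)
    (n : ℤ) :
    (((preadditiveYoneda.obj Q).mapHomologicalComplex _).obj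
        (((r.mapHomologicalComplex (ComplexShape.up ℤ)).obj P).op)).ExactAt n := by
  haveI : r₁.IsRightAdjoint := adj.isRightAdjoint
  have h' := h n
  rw [HomologicalComplex.exactAt_iff, ShortComplex.ab_exact_iff] at h' ⊢
  intro x₂ hx₂
  set c := (ComplexShape.up ℤ).symm
  have key : P.d (c.next n) n ≫ (adj.homEquiv _ _ x₂ : P.X n ⟶ r₁.obj Q) = 0 := by
    erw [← adj.homEquiv_naturality_left]
    have : r.map (P.d (c.next n) n) ≫ x₂ = 0 := hx₂
    rw [this]
    simp [Adjunction.homEquiv_apply]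
  obtain ⟨y, hy⟩ := h' (adj.homEquiv _ _ x₂) key
  refine ⟨(adj.homEquiv _ _).symm y, ?_⟩
  have : r.map (P.d n (c.prev n)) ≫ (adj.homEquiv _ _).symm y = x₂ := by
    erw [← adj.homEquiv_naturality_left_symm]
    have hy' : P.d n (c.prev n) ≫ y = adj.homEquiv _ _ x₂ := hy
    rw [hy']
    exact Equiv.symm_apply_apply _ _
  exact this

/-- Let `(A, B, C)` be a recollement of abelian categories with a
ladder of `r`-height four (functors `r⁰ ⊣ r¹ ⊣ r² ⊣ r³`, where `r⁰ = r`).  Then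
`r = r⁰ : C ⥤ B` preserves Gorenstein projective objects, and `e ∘ r` restricted to
the Gorenstein projective objects of `C` is naturally isomorphic to the identity. -/
theorem ladder_r_height_four_r_preserves_gorensteinProjective
    {A : Type u₁} {B : Type u₂} {C : Type u₃}
    [Category.{v₁} A] [Category.{v₂} B] [Category.{v₃} C]
    [Abelian A] [Abelian B] [Abelian C]
    [EnoughProjectives B] [EnoughProjectives C]
    (R : AbRecollement A B C)
    (r₁ : B ⥤ C) (r₂ : C ⥤ B) (r₃ : B ⥤ C)
    (adj₀₁ : R.r ⊣ r₁) (adj₁₂ : r₁ ⊣ r₂) (adj₂₃ : r₂ ⊣ r₃) :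
    (∀ X : C, IsGorensteinProjective X → IsGorensteinProjective (R.r.obj X)) ∧
    Nonempty
      ((ObjectProperty.ι (fun X : C => IsGorensteinProjective X) ⋙ R.r ⋙ R.e) ≅
        ObjectProperty.ι (fun X : C => IsGorensteinProjective X)) := by
  haveI := R.r_full
  haveI := R.r_faithful
  haveI : R.r.IsRightAdjoint := R.adj_er.isRightAdjoint
  haveI hc₀ : PreservesColimits R.r := adj₀₁.leftAdjoint_preservesColimits
  haveI hl₀ : PreservesLimits R.r := R.adj_er.rightAdjoint_preservesLimits
  haveI hc₁ : PreservesColimits r₁ := adj₁₂.leftAdjoint_preservesColimits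
  haveI hc₂ : PreservesColimits r₂ := adj₂₃.leftAdjoint_preservesColimits
  haveI : PreservesFiniteLimits R.r := PreservesLimitsOfSize.preservesFiniteLimits _
  haveI : PreservesFiniteColimits R.r := PreservesColimitsOfSize.preservesFiniteColimits _
  haveI : R.r.Additive := Functor.additive_of_preserves_binary_products _
  haveI : r₁.IsRightAdjoint := adj₀₁.isRightAdjoint
  haveI hl₁ : PreservesLimits r₁ := adj₀₁.rightAdjoint_preservesLimits
  haveI : r₁.Additive := Functor.additive_of_preserves_binary_products _
  constructor
  · rintro X ⟨P, hproj, hex, htot, ⟨e⟩⟩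
    refine ⟨(R.r.mapHomologicalComplex _).obj P, fun n => ?_, fun n => ?_, fun Q hQ n => ?_, ?_⟩
    · exact adj₀₁.map_projective _ (hproj n)
    · exact AbRecollement.exactAt_map_aux P R.r n (hex n)
    · exact AbRecollement.homComplex_exactAt_aux R.r r₁ adj₀₁ P Q
        (htot (r₁.obj Q) (adj₁₂.map_projective Q hQ)) n
    · exact ⟨R.r.mapIso e ≪≫ PreservesCokernel.iso R.r _⟩
  · exact ⟨Functor.isoWhiskerLeft _ (asIso R.adj_er.counit) ≪≫ Functor.rightUnitor _⟩
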